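/- Every QED-domain in ℂ has a weakly flat boundary: if D ⊆ ℂ satisfies M(Δ(E,F;ℂ̄)) ≤ K·M(Δ(E,F;D)) for some K ≥ 1 and all pairs of disjoint continua E, F ⊂ D, then for every z₀ ∈ ∂D, every neighborhood U of z₀, and every P > 0, there is a neighborhood V ⊆ U of z₀ such that M(Δ(E,F;D)) ≥ P for all continua E, F in D intersecting both ∂U and ∂V. -/

import Mathlib

open MeasureTheory Metric Filter Set
open scoped ENNReal Topology

/-- A (piecewise-smooth) parametrized curve in the plane. -/
structure PlaneCurve where
  a : ℝ
  b : ℝ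
  hab : a ≤ b
  γ : ℝ → ℂ
  cont : ContinuousOn γ (Set.Icc a b)
  diff : DifferentiableOn ℝ γ (Set.Ioo a b)

/-- The line integral `∫_γ ϱ ds` of a density `ϱ` along a curve. -/
noncomputable def lineIntegral (ϱ : ℂ → ℝ≥0∞) (c : PlaneCurve) : ℝ≥0∞ :=
  ∫⁻ t in Set.Ioo c.a c.b, ϱ (c.γ t) * ENNReal.ofReal ‖deriv c.γ t‖

/-- `ϱ` is admissible for the curve family `Γ`: `∫_γ ϱ ds ≥ 1` for every `γ ∈ Γ`. -/
def IsAdmissible (Γ : Set PlaneCurve) (ϱ : ℂ → ℝ≥0∞) : Prop :=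
  Measurable ϱ ∧ ∀ c ∈ Γ, 1 ≤ lineIntegral ϱ c

/-- The conformal modulus `M(Γ)` of a family of curves `Γ` in `ℂ`. -/
noncomputable def modulus (Γ : Set PlaneCurve) : ℝ≥0∞ :=
  ⨅ (ϱ : ℂ → ℝ≥0∞) (_ : IsAdmissible Γ ϱ), ∫⁻ z, (ϱ z) ^ 2

/-- The family `Δ(E,F;D)` of curves joining `E` and `F` in `D`:
endpoints in `E` and `F` respectively, interior in `D`. -/
def joining (E F D : Set ℂ) : Set PlaneCurve :=
  {c | c.γ c.a ∈ E ∧ c.γ c.b ∈ F ∧ ∀ t ∈ Set.Ioo c.a c.b, c.γ t ∈ D}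

/-! ### Auxiliary lemmas -/

open scoped Real

private lemma real_polarCoord_symm_apply (p : ℝ × ℝ) :
    polarCoord.symm p = (p.1 * Real.cos p.2, p.1 * Real.sin p.2) := rfl

/-- Change of variables for lower Lebesgue integrals in (translated) polar coordinates,
as an inequality. -/
private lemma lintegral_polar_le (z₀ : ℂ) (g : ℂ → ℝ≥0∞) (hg : Measurable g)
    {S : Set (ℝ × ℝ)} (hSm : MeasurableSet S) (hS : S ⊆ polarCoord.target) :
    ∫⁻ p in S, ENNReal.ofReal p.1 * g (z₀ + (p.1 : ℂ) * Complex.exp ((p.2 : ℂ) * Complex.I))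
      ≤ ∫⁻ z, g z := by
  set B : ℝ × ℝ → ℝ × ℝ →L[ℝ] ℝ × ℝ := fun p =>
    LinearMap.toContinuousLinearMap (Matrix.toLin (Module.Basis.finTwoProd ℝ) (Module.Basis.finTwoProd ℝ)
      !![Real.cos p.2, -p.1 * Real.sin p.2; Real.sin p.2, p.1 * Real.cos p.2]) with hB
  have hBdet : ∀ p, (B p).det = p.1 := by
    intro p
    conv_rhs => rw [← one_mul p.1, ← Real.cos_sq_add_sin_sq p.2]
    simp only [hB, neg_mul, LinearMap.det_toContinuousLinearMap, LinearMap.det_toLin,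
      Matrix.det_fin_two_of, sub_neg_eq_add]
    ring
  set f : ℝ × ℝ → ℝ × ℝ := fun p => (z₀.re, z₀.im) + polarCoord.symm p with hf
  have hder : ∀ p ∈ S, HasFDerivWithinAt f (B p) S p := fun p _ =>
    ((hasFDerivAt_polarCoord_symm p).const_add _).hasFDerivWithinAt
  have hinj : Set.InjOn f S := by
    intro p hp q hq hpq
    refine polarCoord.symm.injOn ?_ ?_ (by exact add_left_cancel hpq)
    · rw [polarCoord.symm_source]; exact hS hp
    · rw [polarCoord.symm_source]; exact hS hq
  set G : ℝ × ℝ → ℝ≥0∞ := fun q => g (Complex.measurableEquivRealProd.symm q) with hG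
  have himg := lintegral_image_eq_lintegral_abs_det_fderiv_mul volume hSm hder hinj G
  have hcongr : ∫⁻ p in S, ENNReal.ofReal |(B p).det| * G (f p)
      = ∫⁻ p in S, ENNReal.ofReal p.1
          * g (z₀ + (p.1 : ℂ) * Complex.exp ((p.2 : ℂ) * Complex.I)) := by
    refine setLIntegral_congr_fun hSm (fun p hp => ?_)
    have hmem : p ∈ Set.Ioi (0 : ℝ) ×ˢ Set.Ioo (-π) π := hS hp
    have hp1 : 0 < p.1 := (Set.mem_prod.1 hmem).1
    have h1 : |(B p).det| = p.1 := by rw [hBdet]; exact abs_of_pos hp1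
    have h2 : Complex.measurableEquivRealProd.symm (f p)
        = z₀ + (p.1 : ℂ) * Complex.exp ((p.2 : ℂ) * Complex.I) := by
      rw [hf]
      simp only [real_polarCoord_symm_apply, Complex.measurableEquivRealProd_symm_apply,
        Prod.fst_add, Prod.snd_add]
      rw [Complex.exp_mul_I]
      apply Complex.ext <;>
        simp [Complex.cos_ofReal_re, Complex.sin_ofReal_re, Complex.cos_ofReal_im,
          Complex.sin_ofReal_im, add_comm]
    rw [h1]
    exact congrArg (fun w => ENNReal.ofReal p.1 * g w) h2
  have hle : ∫⁻ x in f '' S, G x ≤ ∫⁻ x, G x := setLIntegral_le_lintegral _ _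
  have hGint : ∫⁻ x, G x = ∫⁻ z, g z := by
    have hmp : MeasurePreserving (Complex.measurableEquivRealProd.symm) volume volume :=
      Complex.volume_preserving_equiv_real_prod.symm _
    exact hmp.lintegral_comp hg
  calc ∫⁻ p in S, ENNReal.ofReal p.1
          * g (z₀ + (p.1 : ℂ) * Complex.exp ((p.2 : ℂ) * Complex.I))
      = ∫⁻ p in S, ENNReal.ofReal |(B p).det| * G (f p) := hcongr.symm
    _ = ∫⁻ x in f '' S, G x := himg.symm
    _ ≤ ∫⁻ x, G x := hle
    _ = ∫⁻ z, g z := hGint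

private lemma circle_hasDerivAt (z₀ : ℂ) (ρ s t : ℝ) :
    HasDerivAt (fun t : ℝ => z₀ + (ρ : ℂ) * Complex.exp (((s * t : ℝ) : ℂ) * Complex.I))
      ((ρ : ℂ) * (Complex.exp (((s * t : ℝ) : ℂ) * Complex.I) * ((s : ℂ) * Complex.I))) t := by
  have h0 : HasDerivAt (fun t : ℝ => ((s * t : ℝ) : ℂ)) (s : ℂ) t := by
    have h := (Complex.ofRealCLM.hasDerivAt (x := t)).const_mul (s : ℂ)
    simp only [Complex.ofRealCLM_apply, mul_one] at h
    have e : (fun y : ℝ => (s : ℂ) * (y : ℂ)) = fun u : ℝ => ((s * u : ℝ) : ℂ) := by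
      funext u; push_cast; ring
    rw [e] at h
    simpa using h
  have h1 := h0.mul_const Complex.I
  have h2 := h1.cexp
  exact (h2.const_mul (ρ : ℂ)).const_add z₀

private lemma circle_deriv_norm (z₀ : ℂ) {ρ : ℝ} (hρ : 0 ≤ ρ) {s : ℝ} (hs : |s| = 1) (t : ℝ) :
    ‖(ρ : ℂ) * (Complex.exp (((s * t : ℝ) : ℂ) * Complex.I) * ((s : ℂ) * Complex.I))‖ = ρ := by
  simp only [norm_mul, Complex.norm_real, Real.norm_eq_abs, Complex.norm_I,
    Complex.norm_exp_ofReal_mul_I, one_mul, mul_one, abs_of_nonneg hρ, hs]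

/-- The circular arc as a `PlaneCurve`. -/
private noncomputable def circleCurve (z₀ : ℂ) (ρ s a b : ℝ) (hab : a ≤ b) : PlaneCurve where
  a := a
  b := b
  hab := hab
  γ := fun t => z₀ + (ρ : ℂ) * Complex.exp (((s * t : ℝ) : ℂ) * Complex.I)
  cont := fun t _ =>
    ((circle_hasDerivAt z₀ ρ s t).differentiableAt.continuousAt).continuousWithinAt
  diff := fun t _ =>
    ((circle_hasDerivAt z₀ ρ s t).differentiableAt).differentiableWithinAt

private lemma lineIntegral_circleCurve (ϱ : ℂ → ℝ≥0∞) (hm : Measurable ϱ) (z₀ : ℂ)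
    {ρ : ℝ} (hρ : 0 ≤ ρ) {s : ℝ} (hs : |s| = 1) {a b : ℝ} (hab : a ≤ b) :
    lineIntegral ϱ (circleCurve z₀ ρ s a b hab)
      = ENNReal.ofReal ρ *
        ∫⁻ t in Set.Ioo a b, ϱ (z₀ + (ρ : ℂ) * Complex.exp (((s * t : ℝ) : ℂ) * Complex.I)) := by
  have hder : ∀ t : ℝ,
      deriv (fun t : ℝ => z₀ + (ρ : ℂ) * Complex.exp (((s * t : ℝ) : ℂ) * Complex.I)) t
        = (ρ : ℂ) * (Complex.exp (((s * t : ℝ) : ℂ) * Complex.I) * ((s : ℂ) * Complex.I)) :=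
    fun t => (circle_hasDerivAt z₀ ρ s t).deriv
  have hmeas : Measurable fun t : ℝ =>
      ϱ (z₀ + (ρ : ℂ) * Complex.exp (((s * t : ℝ) : ℂ) * Complex.I)) := by
    apply hm.comp
    exact (continuous_const.add (continuous_const.mul (Complex.continuous_exp.comp
      ((Complex.continuous_ofReal.comp (continuous_const.mul continuous_id)).mul
        continuous_const)))).measurable
  unfold lineIntegral circleCurve
  simp only
  simp_rw [hder, circle_deriv_norm z₀ hρ hs]
  rw [lintegral_mul_const _ hmeas, mul_comm]

/-- Key step: admissibility for the family joining `E` and `F` in `ℂ` gives a lower bound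
on the integral of `ϱ` over any circle meeting both `E` and `F`. -/
private lemma one_le_circle_integral (ϱ : ℂ → ℝ≥0∞) (hm : Measurable ϱ) {E F : Set ℂ}
    (hadm : ∀ c ∈ joining E F Set.univ, 1 ≤ lineIntegral ϱ c)
    {z₀ : ℂ} {ρ : ℝ} (hρ : 0 < ρ) {e f : ℂ} (he : e ∈ E) (hf : f ∈ F)
    (hde : dist e z₀ = ρ) (hdf : dist f z₀ = ρ) :
    1 ≤ ENNReal.ofReal ρ *
      ∫⁻ θ in Set.Ioo (-π) π, ϱ (z₀ + (ρ : ℂ) * Complex.exp ((θ : ℂ) * Complex.I)) := by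
  set θe := Complex.arg (e - z₀) with hθe
  set θf := Complex.arg (f - z₀) with hθf
  have hee : z₀ + (ρ : ℂ) * Complex.exp ((θe : ℂ) * Complex.I) = e := by
    have h := Complex.norm_mul_exp_arg_mul_I (e - z₀)
    rw [Complex.dist_eq] at hde
    rw [← hθe, hde] at h
    rw [h]; ring
  have hff : z₀ + (ρ : ℂ) * Complex.exp ((θf : ℂ) * Complex.I) = f := by
    have h := Complex.norm_mul_exp_arg_mul_I (f - z₀)
    rw [Complex.dist_eq] at hdf
    rw [← hθf, hdf] at h
    rw [h]; ring
  have hθe1 : -π < θe := Complex.neg_pi_lt_arg _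
  have hθe2 : θe ≤ π := Complex.arg_le_pi _
  have hθf1 : -π < θf := Complex.neg_pi_lt_arg _
  have hθf2 : θf ≤ π := Complex.arg_le_pi _
  rcases le_or_gt θe θf with hcase | hcase
  · -- positively oriented arc from `e` to `f`
    set c := circleCurve z₀ ρ 1 θe θf hcase with hc
    have hmem : c ∈ joining E F Set.univ := by
      refine ⟨?_, ?_, fun t _ => Set.mem_univ _⟩
      · show z₀ + (ρ : ℂ) * Complex.exp (((1 * θe : ℝ) : ℂ) * Complex.I) ∈ E
        rw [one_mul, hee]; exact he
      · show z₀ + (ρ : ℂ) * Complex.exp (((1 * θf : ℝ) : ℂ) * Complex.I) ∈ F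
        rw [one_mul, hff]; exact hf
    have h1 := hadm c hmem
    rw [hc, lineIntegral_circleCurve ϱ hm z₀ hρ.le (by norm_num) hcase] at h1
    refine h1.trans (mul_le_mul_right ?_ _)
    calc ∫⁻ t in Set.Ioo θe θf,
            ϱ (z₀ + (ρ : ℂ) * Complex.exp (((1 * t : ℝ) : ℂ) * Complex.I))
        = ∫⁻ t in Set.Ioo θe θf,
            ϱ (z₀ + (ρ : ℂ) * Complex.exp ((t : ℂ) * Complex.I)) := by
          apply lintegral_congr; intro t; rw [one_mul]
      _ ≤ ∫⁻ t in Set.Ioo (-π) π,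
            ϱ (z₀ + (ρ : ℂ) * Complex.exp ((t : ℂ) * Complex.I)) :=
          lintegral_mono_set (Set.Ioo_subset_Ioo hθe1.le hθf2)
  · -- negatively oriented arc from `e` to `f`
    have hab : -θe ≤ -θf := by linarith
    set c := circleCurve z₀ ρ (-1) (-θe) (-θf) hab with hc
    have hmem : c ∈ joining E F Set.univ := by
      refine ⟨?_, ?_, fun t _ => Set.mem_univ _⟩
      · show z₀ + (ρ : ℂ) * Complex.exp (((-1 * -θe : ℝ) : ℂ) * Complex.I) ∈ E
        rw [show (-1 * -θe : ℝ) = θe by ring, hee]; exact he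
      · show z₀ + (ρ : ℂ) * Complex.exp (((-1 * -θf : ℝ) : ℂ) * Complex.I) ∈ F
        rw [show (-1 * -θf : ℝ) = θf by ring, hff]; exact hf
    have h1 := hadm c hmem
    rw [hc, lineIntegral_circleCurve ϱ hm z₀ hρ.le (by norm_num) hab] at h1
    refine h1.trans (mul_le_mul_right ?_ _)
    have hsub : Set.Ioo (-θe) (-θf) ⊆ Set.Ioo (-π) π := by
      apply Set.Ioo_subset_Ioo <;> linarith
    calc ∫⁻ t in Set.Ioo (-θe) (-θf),
            ϱ (z₀ + (ρ : ℂ) * Complex.exp (((-1 * t : ℝ) : ℂ) * Complex.I))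
        ≤ ∫⁻ t in Set.Ioo (-π) π,
            ϱ (z₀ + (ρ : ℂ) * Complex.exp (((-1 * t : ℝ) : ℂ) * Complex.I)) :=
          lintegral_mono_set hsub
      _ = ∫⁻ t in Set.Ioo (-π) π,
            ϱ (z₀ + (ρ : ℂ) * Complex.exp (((-t : ℝ) : ℂ) * Complex.I)) := by
          apply lintegral_congr; intro t; norm_num
      _ = ∫⁻ t in Set.Ioo (-π) π,
            ϱ (z₀ + (ρ : ℂ) * Complex.exp ((t : ℂ) * Complex.I)) := by
          have h := (Measure.measurePreserving_neg (volume : Measure ℝ)).setLIntegral_comp_emb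
            (MeasurableEquiv.neg ℝ).measurableEmbedding
            (fun θ : ℝ => ϱ (z₀ + (ρ : ℂ) * Complex.exp ((θ : ℂ) * Complex.I)))
            (Set.Ioo (-π) π)
          rw [show (Neg.neg '' Set.Ioo (-π) π : Set ℝ) = Set.Ioo (-π) π by
            rw [Set.image_neg_Ioo]; simp] at h
          exact h
  -- (both cases closed above)

/-- Lower bound on the modulus of the family of curves joining two sets that both meet
every circle `|z - z₀| = ρ`, `ρ ∈ (r, R)`. -/
private lemma modulus_univ_lower (z₀ : ℂ) {r R : ℝ} (hr : 0 < r) (hrR : r < R)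
    {E F : Set ℂ}
    (hE : ∀ ρ ∈ Set.Ioo r R, ∃ e ∈ E, dist e z₀ = ρ)
    (hF : ∀ ρ ∈ Set.Ioo r R, ∃ f ∈ F, dist f z₀ = ρ) :
    ENNReal.ofReal ((2 * π)⁻¹ * Real.log (R / r)) ≤ modulus (joining E F Set.univ) := by
  rw [modulus]
  refine le_iInf₂ fun ϱ hϱ => ?_
  obtain ⟨hm, hadm⟩ := hϱ
  -- per-radius estimate
  have per_rho : ∀ ρ ∈ Set.Ioo r R,
      ENNReal.ofReal ((2 * π * ρ)⁻¹)
        ≤ ∫⁻ θ in Set.Ioo (-π) π,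
            ENNReal.ofReal ρ * ϱ (z₀ + (ρ : ℂ) * Complex.exp ((θ : ℂ) * Complex.I)) ^ 2 := by
    intro ρ hρ
    have hρpos : 0 < ρ := hr.trans hρ.1
    obtain ⟨e, he, hde⟩ := hE ρ hρ
    obtain ⟨f, hf, hdf⟩ := hF ρ hρ
    have h1 := one_le_circle_integral ϱ hm hadm hρpos he hf hde hdf
    set q : ℝ → ℝ≥0∞ := fun θ => ϱ (z₀ + (ρ : ℂ) * Complex.exp ((θ : ℂ) * Complex.I)) with hq
    have hqm : Measurable q := by
      apply hm.comp
      exact (continuous_const.add (continuous_const.mul (Complex.continuous_exp.comp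
        (Complex.continuous_ofReal.mul continuous_const)))).measurable
    set μI := (volume : Measure ℝ).restrict (Set.Ioo (-π) π) with hμI
    -- Cauchy–Schwarz
    have hCS := ENNReal.lintegral_mul_le_Lp_mul_Lq μI
      Real.HolderConjugate.two_two
      hqm.aemeasurable (aemeasurable_const (b := (1 : ℝ≥0∞)))
    simp only [Pi.mul_apply, mul_one, ENNReal.one_rpow] at hCS
    have hvol : ∫⁻ _ : ℝ, (1 : ℝ≥0∞) ∂μI = ENNReal.ofReal (2 * π) := by
      rw [hμI, lintegral_one, Measure.restrict_apply_univ, Real.volume_Ioo]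
      congr 1; ring
    rw [hvol] at hCS
    set A : ℝ≥0∞ := ∫⁻ θ, q θ ^ 2 ∂μI with hA
    have hrpow : (∫⁻ θ, q θ ^ (2 : ℝ) ∂μI) = A := by
      rw [hA]
      apply lintegral_congr; intro θ
      rw [show (2 : ℝ) = ((2 : ℕ) : ℝ) by norm_num, ENNReal.rpow_natCast]
    rw [hrpow] at hCS
    set c : ℝ≥0∞ := ENNReal.ofReal ρ with hcρ
    set T : ℝ≥0∞ := ENNReal.ofReal (2 * π) with hT
    have h2 : (1 : ℝ≥0∞) ≤ c * (A ^ (1 / 2 : ℝ) * T ^ (1 / 2 : ℝ)) :=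
      h1.trans (mul_le_mul_right hCS _)
    have hXX : (A ^ (1 / 2 : ℝ) * T ^ (1 / 2 : ℝ)) * (A ^ (1 / 2 : ℝ) * T ^ (1 / 2 : ℝ))
        = A * T := by
      have hA2 : A ^ (1 / 2 : ℝ) * A ^ (1 / 2 : ℝ) = A := by
        rw [← ENNReal.rpow_add_of_nonneg _ _ (by norm_num) (by norm_num)]
        norm_num
      have hT2 : T ^ (1 / 2 : ℝ) * T ^ (1 / 2 : ℝ) = T := by
        rw [← ENNReal.rpow_add_of_nonneg _ _ (by norm_num) (by norm_num)]
        norm_num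
      calc (A ^ (1 / 2 : ℝ) * T ^ (1 / 2 : ℝ)) * (A ^ (1 / 2 : ℝ) * T ^ (1 / 2 : ℝ))
          = (A ^ (1 / 2 : ℝ) * A ^ (1 / 2 : ℝ)) * (T ^ (1 / 2 : ℝ) * T ^ (1 / 2 : ℝ)) := by ring
        _ = A * T := by rw [hA2, hT2]
    have h3 : (1 : ℝ≥0∞) ≤ (c * T) * (c * A) := by
      calc (1 : ℝ≥0∞) = 1 * 1 := (one_mul 1).symm
        _ ≤ (c * (A ^ (1 / 2 : ℝ) * T ^ (1 / 2 : ℝ)))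
              * (c * (A ^ (1 / 2 : ℝ) * T ^ (1 / 2 : ℝ))) := mul_le_mul' h2 h2
        _ = (c * c) * ((A ^ (1 / 2 : ℝ) * T ^ (1 / 2 : ℝ))
              * (A ^ (1 / 2 : ℝ) * T ^ (1 / 2 : ℝ))) := by ring
        _ = (c * c) * (A * T) := by rw [hXX]
        _ = (c * T) * (c * A) := by ring
    have hcT0 : c * T ≠ 0 := by
      rw [hcρ, hT]
      simp only [ne_eq, mul_eq_zero, ENNReal.ofReal_eq_zero, not_or, not_le]
      constructor
      · exact hρpos
      · positivity
    have hcTtop : c * T ≠ ⊤ := by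
      rw [hcρ, hT]; exact ENNReal.mul_ne_top ENNReal.ofReal_ne_top ENNReal.ofReal_ne_top
    have h4 : (c * T)⁻¹ ≤ c * A := by
      calc (c * T)⁻¹ = (c * T)⁻¹ * 1 := (mul_one _).symm
        _ ≤ (c * T)⁻¹ * ((c * T) * (c * A)) := mul_le_mul_right h3 _
        _ = ((c * T)⁻¹ * (c * T)) * (c * A) := by ring
        _ = c * A := by rw [ENNReal.inv_mul_cancel hcT0 hcTtop, one_mul]
    have h5 : (c * T)⁻¹ = ENNReal.ofReal ((2 * π * ρ)⁻¹) := by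
      rw [hcρ, hT, ← ENNReal.ofReal_mul hρpos.le,
        ← ENNReal.ofReal_inv_of_pos (by positivity)]
      congr 1
      rw [mul_comm ρ (2 * π)]
    have h6 : c * A = ∫⁻ θ in Set.Ioo (-π) π,
        ENNReal.ofReal ρ * ϱ (z₀ + (ρ : ℂ) * Complex.exp ((θ : ℂ) * Complex.I)) ^ 2 := by
      rw [hA, hcρ, hμI, ← lintegral_const_mul _ (hqm.pow_const 2)]
    rw [← h5, ← h6]
    exact h4
  -- the full energy bound
  set q2 : ℝ × ℝ → ℝ≥0∞ := fun p =>
    ENNReal.ofReal p.1 * ϱ (z₀ + (p.1 : ℂ) * Complex.exp ((p.2 : ℂ) * Complex.I)) ^ 2 with hq2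
  have hq2m : Measurable q2 := by
    apply Measurable.mul
    · exact ENNReal.measurable_ofReal.comp measurable_fst
    · apply Measurable.pow_const
      apply hm.comp
      exact (continuous_const.add ((Complex.continuous_ofReal.comp continuous_fst).mul
        (Complex.continuous_exp.comp ((Complex.continuous_ofReal.comp continuous_snd).mul
          continuous_const)))).measurable
  have tonelli : ∫⁻ p in (Set.Ioo r R) ×ˢ (Set.Ioo (-π) π), q2 p
      = ∫⁻ ρ in Set.Ioo r R, ∫⁻ θ in Set.Ioo (-π) π, q2 (ρ, θ) := by
    rw [Measure.volume_eq_prod, ← Measure.prod_restrict, lintegral_prod _ hq2m.aemeasurable]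
  -- compute the logarithmic integral
  have hlogint : ENNReal.ofReal ((2 * π)⁻¹ * Real.log (R / r))
      = ∫⁻ ρ in Set.Ioo r R, ENNReal.ofReal ((2 * π * ρ)⁻¹) := by
    have hcont : ContinuousOn (fun ρ : ℝ => (2 * π * ρ)⁻¹) (Set.Icc r R) := by
      apply ContinuousOn.inv₀
      · exact (continuous_const.mul continuous_id).continuousOn
      · intro x hx
        have : 0 < x := lt_of_lt_of_le hr hx.1
        positivity
    have hint : IntegrableOn (fun ρ : ℝ => (2 * π * ρ)⁻¹) (Set.Ioo r R) :=
      (hcont.integrableOn_Icc).mono_set Set.Ioo_subset_Icc_self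
    have hnn : 0 ≤ᵐ[(volume : Measure ℝ).restrict (Set.Ioo r R)]
        fun ρ : ℝ => (2 * π * ρ)⁻¹ := by
      rw [EventuallyLE, ae_restrict_iff' measurableSet_Ioo]
      refine Filter.Eventually.of_forall fun x hx => ?_
      have : 0 < x := lt_of_lt_of_le hr hx.1.le
      positivity
    rw [← ofReal_integral_eq_lintegral_ofReal hint hnn]
    congr 1
    rw [← integral_Ioc_eq_integral_Ioo, ← intervalIntegral.integral_of_le hrR.le]
    have : ∀ x : ℝ, (2 * π * x)⁻¹ = (2 * π)⁻¹ * x⁻¹ := fun x => by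
      rw [mul_inv]
    simp_rw [this]
    rw [intervalIntegral.integral_const_mul, integral_inv_of_pos hr (hr.trans hrR)]
  calc ENNReal.ofReal ((2 * π)⁻¹ * Real.log (R / r))
      = ∫⁻ ρ in Set.Ioo r R, ENNReal.ofReal ((2 * π * ρ)⁻¹) := hlogint
    _ ≤ ∫⁻ ρ in Set.Ioo r R, ∫⁻ θ in Set.Ioo (-π) π, q2 (ρ, θ) := by
        apply lintegral_mono_ae
        rw [ae_restrict_iff' measurableSet_Ioo]
        exact Filter.Eventually.of_forall fun ρ hρ => per_rho ρ hρ
    _ = ∫⁻ p in (Set.Ioo r R) ×ˢ (Set.Ioo (-π) π), q2 p := tonelli.symm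
    _ ≤ ∫⁻ z, ϱ z ^ 2 := by
        apply lintegral_polar_le z₀ (fun z => ϱ z ^ 2) (hm.pow_const 2)
          (measurableSet_Ioo.prod measurableSet_Ioo)
        rw [show polarCoord.target = Set.Ioi (0 : ℝ) ×ˢ Set.Ioo (-π) π from rfl]
        exact Set.prod_mono (fun x hx => hr.trans hx.1) subset_rfl

/-- If two sets are not disjoint, the modulus of the joining family is infinite
(there is a degenerate curve of zero length, so no admissible density exists). -/
private lemma modulus_eq_top_of_not_disjoint {E F D : Set ℂ} (h : ¬ Disjoint E F) :
    ∀ P : ℝ≥0∞, P ≤ modulus (joining E F D) := by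
  intro P
  obtain ⟨z, hzE, hzF⟩ := Set.not_disjoint_iff.1 h
  rw [modulus]
  refine le_iInf₂ fun ϱ hϱ => ?_
  exfalso
  set c0 : PlaneCurve :=
    ⟨0, 0, le_rfl, fun _ => z, continuousOn_const, differentiableOn_const z⟩ with hc0
  have hmem : c0 ∈ joining E F D := by
    refine ⟨hzE, hzF, fun t ht => ?_⟩
    simp only [hc0, Set.Ioo_self] at ht
    exact absurd ht (Set.notMem_empty t)
  have h1 := hϱ.2 c0 hmem
  rw [lineIntegral] at h1
  simp only [hc0, Set.Ioo_self, Measure.restrict_empty, lintegral_zero_measure] at h1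
  exact absurd h1 (by norm_num)

/-- Every QED-domain in `ℂ` has a weakly flat boundary. -/
theorem qed_domain_weakly_flat
    (D : Set ℂ) (hD : IsOpen D) (hDconn : IsConnected D)
    (K : ℝ) (hK : 1 ≤ K)
    (hQED : ∀ E F : Set ℂ, E ⊆ D → F ⊆ D → IsCompact E → IsConnected E →
      IsCompact F → IsConnected F → Disjoint E F →
      modulus (joining E F Set.univ) ≤ ENNReal.ofReal K * modulus (joining E F D)) :
    ∀ z₀ ∈ frontier D, ∀ U ∈ 𝓝 z₀, ∀ P : ℝ, 0 < P →
      ∃ V ∈ 𝓝 z₀, V ⊆ U ∧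
        ∀ E F : Set ℂ, E ⊆ D → F ⊆ D → IsCompact E → IsConnected E →
          IsCompact F → IsConnected F →
          (E ∩ frontier U).Nonempty → (E ∩ frontier V).Nonempty →
          (F ∩ frontier U).Nonempty → (F ∩ frontier V).Nonempty →
          ENNReal.ofReal P ≤ modulus (joining E F D) := by
  intro z₀ hz₀ U hU P hP
  obtain ⟨ε, hε, hball⟩ := Metric.mem_nhds_iff.1 hU
  have hKpos : 0 < K := lt_of_lt_of_le one_pos hK
  set R : ℝ := ε / 2 with hRdef
  have hR : 0 < R := by positivity
  set r : ℝ := R * Real.exp (-(2 * π * (K * P))) with hrdef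
  have hr : 0 < r := by positivity
  have hrR : r < R := by
    rw [hrdef]
    nth_rewrite 2 [← mul_one R]
    apply mul_lt_mul_of_pos_left _ hR
    rw [Real.exp_lt_one_iff, neg_lt_zero]
    exact mul_pos (by positivity) (mul_pos hKpos hP)
  refine ⟨ball z₀ r, ball_mem_nhds _ hr, ?_, ?_⟩
  · exact (ball_subset_ball (by linarith)).trans hball
  intro E F hED hFD hEc hEconn hFc hFconn hEU hEV hFU hFV
  by_cases hdisj : Disjoint E F
  swap
  · exact modulus_eq_top_of_not_disjoint hdisj _
  -- frontier of the ball is the sphere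
  have hfr : frontier (ball z₀ r) = sphere z₀ r := frontier_ball z₀ hr.ne'
  -- points of the frontier of U are far from z₀
  have hfarU : ∀ x ∈ frontier U, ε ≤ dist x z₀ := by
    intro x hx
    by_contra hlt
    push_neg at hlt
    have hxball : x ∈ ball z₀ ε := by rwa [mem_ball]
    have : x ∈ interior U := interior_maximal hball isOpen_ball hxball
    exact hx.2 this
  -- both continua meet every intermediate circle
  have hmeet : ∀ (G : Set ℂ), IsConnected G → (G ∩ frontier U).Nonempty →
      (G ∩ frontier (ball z₀ r)).Nonempty →
      ∀ ρ ∈ Set.Ioo r R, ∃ e ∈ G, dist e z₀ = ρ := by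
    intro G hGconn hGU hGV ρ hρ
    obtain ⟨x₁, hx₁G, hx₁⟩ := hGV
    obtain ⟨x₂, hx₂G, hx₂⟩ := hGU
    rw [hfr, mem_sphere] at hx₁
    have hx₂d : ε ≤ dist x₂ z₀ := hfarU _ hx₂
    have hcont : ContinuousOn (fun y : ℂ => dist y z₀) G :=
      (continuous_id.dist continuous_const).continuousOn
    have hIVT := hGconn.isPreconnected.intermediate_value hx₁G hx₂G hcont
    have hmemIcc : ρ ∈ Set.Icc (dist x₁ z₀) (dist x₂ z₀) := by
      rw [hx₁]
      exact ⟨hρ.1.le, le_trans (by linarith [hρ.2]) hx₂d⟩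
    obtain ⟨e, heG, hde⟩ := hIVT hmemIcc
    exact ⟨e, heG, hde⟩
  have hEsp := hmeet E hEconn hEU hEV
  have hFsp := hmeet F hFconn hFU hFV
  have lower := modulus_univ_lower z₀ hr hrR hEsp hFsp
  have hQ := hQED E F hED hFD hEc hEconn hFc hFconn hdisj
  -- the chosen radii give exactly the required lower bound
  have hlog : (2 * π)⁻¹ * Real.log (R / r) = K * P := by
    have hRr : R / r = Real.exp (2 * π * (K * P)) := by
      rw [hrdef]
      rw [Real.exp_neg]
      field_simp
    rw [hRr, Real.log_exp]
    have hπ := Real.pi_pos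
    field_simp
  have hchain : ENNReal.ofReal K * ENNReal.ofReal P
      ≤ ENNReal.ofReal K * modulus (joining E F D) := by
    calc ENNReal.ofReal K * ENNReal.ofReal P
        = ENNReal.ofReal (K * P) := (ENNReal.ofReal_mul hKpos.le).symm
      _ = ENNReal.ofReal ((2 * π)⁻¹ * Real.log (R / r)) := by rw [hlog]
      _ ≤ modulus (joining E F Set.univ) := lower
      _ ≤ ENNReal.ofReal K * modulus (joining E F D) := hQ
  have hKne : ENNReal.ofReal K ≠ 0 := by
    simp only [ne_eq, ENNReal.ofReal_eq_zero, not_le]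
    exact hKpos
  exact (ENNReal.mul_le_mul_iff_right hKne ENNReal.ofReal_ne_top).1 hchain
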